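/- Let (p_n) be monic polynomials with deg p_n = n satisfying x p_ℓ = Σ_{k=0}^{ℓ+1} J_{ℓ,k} p_k (J lower Hessenberg with superdiagonal 1), and let (q_n) ⊂ L²(μ) be biorthogonal to (p_n). Assume sup_{n ≥ N} |J_{n,n−N}| < ∞ for every N ≥ 0. Define ν_n = (1/n) Σ_{zeros y of p_n, with multiplicity} δ_y and dη_n(x) = (1/n) K_n(x,x) dμ(x). Then for every ℓ ≥ 0 there is a constant c (depending on ℓ and J) such that |∫ x^ℓ dν_n − ∫ x^ℓ dη_n| ≤ c/n for all n; in particular the difference of moments tends to 0. -/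

import Mathlib

open MeasureTheory Polynomial

namespace MZCD

noncomputable def Sfull (J : ℕ → ℕ → ℝ) (k i : ℕ) : ℝ :=
  (if i = k + 1 then 1 else 0) + (if i ≤ k then J k i else 0)

noncomputable def Strunc (J : ℕ → ℕ → ℝ) (n k i : ℕ) : ℝ :=
  if k < n ∧ i < n then Sfull J k i else 0

noncomputable def U (S : ℕ → ℕ → ℝ) : ℕ → ℕ → ℕ → ℝ
  | 0, j, k => if k = j then 1 else 0
  | (ℓ+1), j, i => ∑ k ∈ Finset.range (j + ℓ + 1), U S ℓ j k * S k i

lemma Sfull_eq_zero {J : ℕ → ℕ → ℝ} {k i : ℕ} (h : k + 1 < i) : Sfull J k i = 0 := by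
  unfold Sfull; rw [if_neg (by omega), if_neg (by omega), add_zero]

lemma Strunc_eq_zero {J : ℕ → ℕ → ℝ} {n k i : ℕ} (h : k + 1 < i) : Strunc J n k i = 0 := by
  unfold Strunc; split
  · exact Sfull_eq_zero h
  · rfl

lemma U_eq_zero {S : ℕ → ℕ → ℝ} (hS : ∀ k i, k + 1 < i → S k i = 0) :
    ∀ ℓ j k, j + ℓ < k → U S ℓ j k = 0 := by
  intro ℓ
  induction ℓ with
  | zero => intro j k h; show (if k = j then (1:ℝ) else 0) = 0; rw [if_neg (by omega)]
  | succ ℓ ih =>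
      intro j i h
      show ∑ k ∈ Finset.range (j + ℓ + 1), U S ℓ j k * S k i = 0
      refine Finset.sum_eq_zero fun k hk => ?_
      rw [Finset.mem_range] at hk
      rw [hS k i (by omega), mul_zero]

lemma Mpow_apply (J : ℕ → ℕ → ℝ) (n : ℕ) :
    ∀ (ℓ : ℕ) (i j : Fin n),
      ((Matrix.of fun i j : Fin n => Sfull J (j : ℕ) (i : ℕ)) ^ ℓ) i j
        = U (Strunc J n) ℓ (j : ℕ) (i : ℕ) := by
  intro ℓ
  induction ℓ with
  | zero =>
      intro i j
      rw [pow_zero, Matrix.one_apply]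
      show _ = if (i : ℕ) = (j : ℕ) then (1:ℝ) else 0
      by_cases h : i = j
      · rw [if_pos h, if_pos (by rw [h])]
      · rw [if_neg h, if_neg (fun hc => h (Fin.ext hc))]
  | succ ℓ ih =>
      intro i j
      rw [pow_succ']
      rw [Matrix.mul_apply]
      have hterm : ∀ s : Fin n,
          (Matrix.of fun i j : Fin n => Sfull J (j : ℕ) (i : ℕ)) i s
              * ((Matrix.of fun i j : Fin n => Sfull J (j : ℕ) (i : ℕ)) ^ ℓ) s j
            = U (Strunc J n) ℓ (j : ℕ) (s : ℕ) * Strunc J n (s : ℕ) (i : ℕ) := by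
        intro s
        rw [ih s j]
        have : (Matrix.of fun i j : Fin n => Sfull J (j : ℕ) (i : ℕ)) i s
            = Strunc J n (s : ℕ) (i : ℕ) := by
          show Sfull J (s : ℕ) (i : ℕ) = _
          unfold Strunc
          rw [if_pos ⟨s.isLt, i.isLt⟩]
        rw [this, mul_comm]
      rw [Finset.sum_congr rfl (fun s _ => hterm s)]
      rw [Fin.sum_univ_eq_sum_range (fun s => U (Strunc J n) ℓ (j : ℕ) s * Strunc J n s (i : ℕ)) n]
      show _ = ∑ k ∈ Finset.range ((j : ℕ) + ℓ + 1), U (Strunc J n) ℓ (j : ℕ) k * Strunc J n k (i : ℕ)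
      have hzn : ∀ k, n ≤ k → U (Strunc J n) ℓ (j : ℕ) k * Strunc J n k (i : ℕ) = 0 := by
        intro k hk
        have : Strunc J n k (i : ℕ) = 0 := by unfold Strunc; rw [if_neg (by omega)]
        rw [this, mul_zero]
      have hzj : ∀ k, (j : ℕ) + ℓ + 1 ≤ k → U (Strunc J n) ℓ (j : ℕ) k * Strunc J n k (i : ℕ) = 0 := by
        intro k hk
        rw [U_eq_zero (fun a b h => Strunc_eq_zero h) ℓ (j : ℕ) k (by omega), zero_mul]
      set f : ℕ → ℝ := fun k => U (Strunc J n) ℓ (j : ℕ) k * Strunc J n k (i : ℕ) with hf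
      have h1 : ∑ k ∈ Finset.range n, f k = ∑ k ∈ Finset.range (max n ((j:ℕ) + ℓ + 1)), f k :=
        Finset.sum_subset (Finset.range_subset_range.2 (le_max_left _ _))
          (fun k _ hk => by
            rw [Finset.mem_range, not_lt] at hk
            exact hzn k hk)
      have h2 : ∑ k ∈ Finset.range ((j:ℕ) + ℓ + 1), f k
          = ∑ k ∈ Finset.range (max n ((j:ℕ) + ℓ + 1)), f k :=
        Finset.sum_subset (Finset.range_subset_range.2 (le_max_right _ _))
          (fun k _ hk => by
            rw [Finset.mem_range, not_lt] at hk
            exact hzj k hk)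
      rw [h1, h2]

lemma trace_Mpow (J : ℕ → ℕ → ℝ) (n ℓ : ℕ) :
    Matrix.trace ((Matrix.of fun i j : Fin n => Sfull J (j : ℕ) (i : ℕ)) ^ ℓ)
      = ∑ j ∈ Finset.range n, U (Strunc J n) ℓ j j := by
  rw [Matrix.trace]
  rw [show (fun i : Fin n => Matrix.diag ((Matrix.of fun i j : Fin n => Sfull J (j:ℕ) (i:ℕ)) ^ ℓ) i)
      = fun i : Fin n => U (Strunc J n) ℓ (i : ℕ) (i : ℕ) from
    funext fun i => Mpow_apply J n ℓ i i]
  exact Fin.sum_univ_eq_sum_range (fun j => U (Strunc J n) ℓ j j) n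

lemma U_trunc_eq (J : ℕ → ℕ → ℝ) (n : ℕ) :
    ∀ ℓ j, j + ℓ < n → ∀ k, U (Strunc J n) ℓ j k = U (Sfull J) ℓ j k := by
  intro ℓ
  induction ℓ with
  | zero => intro j _ k; rfl
  | succ ℓ ih =>
      intro j hj k
      show ∑ m ∈ Finset.range (j + ℓ + 1), U (Strunc J n) ℓ j m * Strunc J n m k
          = ∑ m ∈ Finset.range (j + ℓ + 1), U (Sfull J) ℓ j m * Sfull J m k
      refine Finset.sum_congr rfl fun m hm => ?_
      rw [Finset.mem_range] at hm
      rw [ih j (by omega) m]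
      by_cases hk : k < n
      · have : Strunc J n m k = Sfull J m k := by unfold Strunc; rw [if_pos ⟨by omega, hk⟩]
        rw [this]
      · have h1 : Strunc J n m k = 0 := by unfold Strunc; rw [if_neg (by omega)]
        have h2 : Sfull J m k = 0 := Sfull_eq_zero (by omega)
        rw [h1, h2]

lemma sum_Sfull (J : ℕ → ℕ → ℝ) (p : ℕ → Polynomial ℝ) {k m : ℕ} (hk : k + 1 < m) :
    ∑ i ∈ Finset.range m, C (Sfull J k i) * p i
      = p (k + 1) + ∑ i ∈ Finset.range (k + 1), C (J k i) * p i := by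
  rw [← Finset.sum_subset (Finset.range_subset_range.2 (by omega : k + 2 ≤ m))
    (fun i _ hi => by
      rw [Finset.mem_range, not_lt] at hi
      rw [Sfull_eq_zero (by omega), map_zero, zero_mul])]
  rw [Finset.sum_range_succ]
  have h1 : Sfull J k (k + 1) = 1 := by unfold Sfull; rw [if_pos rfl, if_neg (by omega), add_zero]
  rw [h1, map_one, one_mul, add_comm]
  congr 1
  refine Finset.sum_congr rfl fun i hi => ?_
  rw [Finset.mem_range] at hi
  have : Sfull J k i = J k i := by unfold Sfull; rw [if_neg (by omega), if_pos (by omega), zero_add]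
  rw [this]

lemma U_expand (J : ℕ → ℕ → ℝ) (p : ℕ → Polynomial ℝ)
    (hrec : ∀ m : ℕ, X * p m = p (m + 1) + ∑ k ∈ Finset.range (m + 1), C (J m k) * p k) :
    ∀ ℓ j, (X : Polynomial ℝ) ^ ℓ * p j
      = ∑ k ∈ Finset.range (j + ℓ + 1), C (U (Sfull J) ℓ j k) * p k := by
  intro ℓ
  induction ℓ with
  | zero =>
      intro j
      rw [pow_zero, one_mul, Finset.sum_range_succ]
      have hz : ∀ k ∈ Finset.range (j + 0), C (U (Sfull J) 0 j k) * p k = 0 := by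
        intro k hk
        rw [Finset.mem_range] at hk
        show C (if k = j then (1:ℝ) else 0) * p k = 0
        rw [if_neg (by omega), map_zero, zero_mul]
      rw [Finset.sum_eq_zero (by simpa using hz)]
      show p j = 0 + C (if j = j then (1:ℝ) else 0) * p j
      rw [if_pos rfl, map_one, one_mul, zero_add]
  | succ ℓ ih =>
      intro j
      have step : (X : Polynomial ℝ) ^ (ℓ+1) * p j
          = ∑ k ∈ Finset.range (j + ℓ + 1), C (U (Sfull J) ℓ j k) * (X * p k) := by
        rw [pow_succ, mul_comm ((X:Polynomial ℝ)^ℓ) X, mul_assoc, ih j, Finset.mul_sum]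
        exact Finset.sum_congr rfl fun k _ => by ring
      rw [step]
      have h1 : ∀ k ∈ Finset.range (j + ℓ + 1),
          C (U (Sfull J) ℓ j k) * (X * p k)
            = ∑ i ∈ Finset.range (j + ℓ + 2), C (U (Sfull J) ℓ j k) * (C (Sfull J k i) * p i) := by
        intro k hk
        rw [Finset.mem_range] at hk
        rw [hrec k, ← sum_Sfull J p (by omega : k + 1 < j + ℓ + 2), Finset.mul_sum]
      rw [Finset.sum_congr rfl h1, Finset.sum_comm]
      have : j + (ℓ + 1) + 1 = j + ℓ + 2 := by omega
      rw [this]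
      refine Finset.sum_congr rfl fun i _ => Eq.symm ?_
      show C (U (Sfull J) (ℓ+1) j i) * p i = _
      have : U (Sfull J) (ℓ+1) j i = ∑ k ∈ Finset.range (j + ℓ + 1), U (Sfull J) ℓ j k * Sfull J k i := rfl
      rw [this, map_sum, Finset.sum_mul]
      exact Finset.sum_congr rfl fun k _ => by rw [map_mul, mul_assoc]

lemma Sfull_bound' (J : ℕ → ℕ → ℝ)
    (hJ : ∀ N : ℕ, ∃ C : ℝ, ∀ n : ℕ, N ≤ n → |J n (n - N)| ≤ C) :
    ∃ C : ℕ → ℝ, (∀ N, 0 ≤ C N) ∧ ∀ N k i, k ≤ i + N → |Sfull J k i| ≤ C N := by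
  choose F hF using hJ
  refine ⟨fun N => 1 + ∑ m ∈ Finset.range (N + 1), max (F m) 0,
    fun N => by positivity, fun N k i hki => ?_⟩
  have habs : |Sfull J k i| ≤ 1 + |if i ≤ k then J k i else 0| := by
    refine (abs_add_le _ _).trans (add_le_add_left ?_ _)
    split <;> simp
  refine habs.trans (add_le_add_right ?_ 1)
  split
  · next hik =>
      have := hF (k - i) k (by omega)
      have h3 : k - (k - i) = i := by omega
      rw [h3] at this
      have hmem : k - i ∈ Finset.range (N + 1) := Finset.mem_range.2 (by omega)
      calc |J k i| ≤ F (k - i) := this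
        _ ≤ max (F (k - i)) 0 := le_max_left _ _
        _ ≤ ∑ m ∈ Finset.range (N + 1), max (F m) 0 :=
            Finset.single_le_sum (f := fun m => max (F m) 0)
              (fun m _ => le_max_right _ _) hmem
  · simpa using Finset.sum_nonneg (fun m (_ : m ∈ Finset.range (N+1)) => le_max_right (F m) (0:ℝ))


lemma Strunc_le_Sfull (J : ℕ → ℕ → ℝ) (n k i : ℕ) : |Strunc J n k i| ≤ |Sfull J k i| := by
  unfold Strunc; split
  · exact le_rfl
  · simp [abs_nonneg]


lemma U_bound' (C : ℕ → ℝ) (hC0 : ∀ N, 0 ≤ C N) :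
    ∀ ℓ d : ℕ, ∃ B : ℝ, 0 ≤ B ∧ ∀ S : ℕ → ℕ → ℝ,
      (∀ k i, k + 1 < i → S k i = 0) →
      (∀ N k i, k ≤ i + N → |S k i| ≤ C N) →
      ∀ j k, j ≤ k + d → |U S ℓ j k| ≤ B := by
  intro ℓ
  induction ℓ with
  | zero =>
      intro d
      refine ⟨1, zero_le_one, fun S _ _ j k _ => ?_⟩
      show |if k = j then (1:ℝ) else 0| ≤ 1
      split <;> simp
  | succ ℓ ih =>
      intro d
      obtain ⟨B, hB0, hB⟩ := ih (d + 1)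
      refine ⟨(d + ℓ + 2) * (B * C (d + ℓ + 1)), by have := hC0 (d + ℓ + 1); positivity, fun S hS0 hSb j i hji => ?_⟩
      show |∑ k ∈ Finset.range (j + ℓ + 1), U S ℓ j k * S k i| ≤ _
      have key : ∀ k ∈ Finset.range (j + ℓ + 1), |U S ℓ j k * S k i| ≤
          if i ≤ k + 1 then B * C (d + ℓ + 1) else 0 := by
        intro k hk
        rw [Finset.mem_range] at hk
        split
        · next h =>
            rw [abs_mul]
            exact mul_le_mul (hB S hS0 hSb j k (by omega))
              (hSb (d + ℓ + 1) k i (by omega)) (abs_nonneg _) hB0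
        · next h => rw [hS0 k i (by omega), mul_zero, abs_zero]
      calc |∑ k ∈ Finset.range (j + ℓ + 1), U S ℓ j k * S k i|
          ≤ ∑ k ∈ Finset.range (j + ℓ + 1), |U S ℓ j k * S k i| := Finset.abs_sum_le_sum_abs _ _
        _ ≤ ∑ k ∈ Finset.range (j + ℓ + 1), (if i ≤ k + 1 then B * C (d + ℓ + 1) else 0) :=
            Finset.sum_le_sum key
        _ = ∑ k ∈ (Finset.range (j + ℓ + 1)).filter (fun k => i ≤ k + 1), B * C (d + ℓ + 1) := by
            rw [Finset.sum_filter]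
        _ ≤ (d + ℓ + 2) * (B * C (d + ℓ + 1)) := by
            refine (Finset.sum_le_card_nsmul _ _ (B * C (d + ℓ + 1)) (fun k _ => le_rfl)).trans ?_
            rw [nsmul_eq_mul]
            refine mul_le_mul_of_nonneg_right ?_ (by have := hC0 (d + ℓ + 1); positivity)
            have hsub : (Finset.range (j + ℓ + 1)).filter (fun k => i ≤ k + 1)
                ⊆ Finset.Icc (i - 1) (j + ℓ) := by
              intro k hk
              rw [Finset.mem_filter, Finset.mem_range] at hk
              rw [Finset.mem_Icc]
              omega
            have h4 := Finset.card_le_card hsub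
            have hcard : (Finset.Icc (i - 1) (j + ℓ)).card = j + ℓ + 1 - (i - 1) :=
              Nat.card_Icc _ _
            have hle : ((Finset.range (j + ℓ + 1)).filter (fun k => i ≤ k + 1)).card
                ≤ d + ℓ + 2 := by omega
            exact_mod_cast Nat.cast_le.2 hle

lemma eval_charpoly {m : Type*} [Fintype m] [DecidableEq m] {R : Type*} [CommRing R]
    (A : Matrix m m R) (t : R) :
    (Matrix.charpoly A).eval t = Matrix.det (t • (1 : Matrix m m R) - A) := by
  rw [Matrix.charpoly, ← Polynomial.coe_evalRingHom, RingHom.map_det]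
  congr 1
  ext i j
  by_cases h : i = j <;>
    simp [h, Matrix.charmatrix_apply, Matrix.one_apply, Matrix.diagonal_apply]

lemma det_aeval_prod {n : ℕ} (A : Matrix (Fin n) (Fin n) ℂ) (s : Multiset ℂ) :
    Matrix.det (Polynomial.aeval A ((s.map (fun t => X - C t)).prod))
      = (s.map (fun t => Matrix.det (A - t • (1 : Matrix (Fin n) (Fin n) ℂ)))).prod := by
  induction s using Multiset.induction_on with
  | empty => simp
  | cons t s ih =>
      rw [Multiset.map_cons, Multiset.prod_cons, map_mul, Matrix.det_mul,
        Multiset.map_cons, Multiset.prod_cons, ← ih]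
      congr 2
      rw [map_sub, Polynomial.aeval_X, Polynomial.aeval_C, Algebra.algebraMap_eq_smul_one]

lemma trace_pow_complex {n : ℕ} (A : Matrix (Fin n) (Fin n) ℂ) (ℓ : ℕ) :
    Matrix.trace (A ^ ℓ) = ((Matrix.charpoly A).roots.map (fun r => r ^ ℓ)).sum := by
  have hsplA : (Matrix.charpoly A).Splits := IsAlgClosed.splits _
  set R : Multiset ℂ := (Matrix.charpoly A).roots with hR
  have hcardR : Multiset.card R = n := by
    rw [hR, Polynomial.splits_iff_card_roots.mp hsplA]
    simp [Matrix.charpoly_natDegree_eq_dim]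
  have hApoly : Matrix.charpoly A = (R.map (fun r => X - C r)).prod :=
    hsplA.eq_prod_roots_of_monic (Matrix.charpoly_monic A)
  rcases Nat.eq_zero_or_pos ℓ with rfl | hℓ
  · rw [pow_zero, Matrix.trace_one]
    have h1 : (R.map (fun r => r ^ 0)) = R.map (fun _ => (1:ℂ)) :=
      Multiset.map_congr rfl fun r _ => pow_zero r
    rw [h1, Multiset.map_const', Multiset.sum_replicate, hcardR]
    simp [Fintype.card_fin]
  have hℓ' : 1 ≤ ℓ := hℓ
  have hcanc : (-1:ℂ) ^ (n * ℓ) * (-1:ℂ) ^ (ℓ * n) = 1 := by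
    rw [mul_comm ℓ n, ← pow_add, ← two_mul, pow_mul]
    norm_num
  have key : ∀ w : ℂ, (Matrix.charpoly (A ^ ℓ)).eval w
      = ((R.map (fun r => X - C (r ^ ℓ))).prod).eval w := by
    intro w
    set h : Polynomial ℂ := X ^ ℓ - C w with hh
    have hmo : h.Monic := Polynomial.monic_X_pow_sub_C w (by omega)
    have hsplh : h.Splits := IsAlgClosed.splits _
    have hdegh : h.natDegree = ℓ := by
      rw [hh]; exact Polynomial.natDegree_X_pow_sub_C
    have hcardh : Multiset.card h.roots = ℓ := by
      rw [Polynomial.splits_iff_card_roots.mp hsplh, hdegh]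
    have hfact : h = (h.roots.map (fun t => X - C t)).prod :=
      hsplh.eq_prod_roots_of_monic hmo
    have haeval : Polynomial.aeval A h = A ^ ℓ - w • (1 : Matrix (Fin n) (Fin n) ℂ) := by
      rw [hh, map_sub, map_pow, Polynomial.aeval_X, Polynomial.aeval_C,
        Algebra.algebraMap_eq_smul_one]
    have hdet1 : (Matrix.charpoly (A ^ ℓ)).eval w
        = (-1 : ℂ) ^ n * Matrix.det (Polynomial.aeval A h) := by
      rw [eval_charpoly, haeval]
      have hneg := Matrix.det_neg (A ^ ℓ - w • (1 : Matrix (Fin n) (Fin n) ℂ))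
      rw [neg_sub] at hneg
      rw [hneg, Fintype.card_fin]
    have hdet2 : Matrix.det (Polynomial.aeval A h)
        = ((h.roots.map (fun t => Matrix.det (A - t • (1 : Matrix (Fin n) (Fin n) ℂ)))).prod) := by
      conv_lhs => rw [hfact]
      exact det_aeval_prod A h.roots
    have hdet3 : ∀ t : ℂ, Matrix.det (A - t • (1 : Matrix (Fin n) (Fin n) ℂ))
        = (-1 : ℂ) ^ n * ((R.map (fun r => t - r)).prod) := by
      intro t
      rw [← neg_sub, Matrix.det_neg, Fintype.card_fin, ← eval_charpoly, hApoly,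
        Polynomial.eval_multiset_prod, Multiset.map_map]
      congr 2
      exact Multiset.map_congr rfl fun r _ => by simp
    have hinner : ∀ r : ℂ, ((h.roots.map (fun t => t - r)).prod) = (-1:ℂ)^ℓ * (r ^ ℓ - w) := by
      intro r
      have h1 : (h.roots.map (fun t => t - r)) = (h.roots.map (fun t => (-1:ℂ) * (r - t))) :=
        Multiset.map_congr rfl fun t _ => by ring
      rw [h1, Multiset.prod_map_mul, Multiset.map_const', Multiset.prod_replicate, hcardh]
      congr 1
      have h2 : ((h.roots.map (fun t => r - t)).prod) = h.eval r := by
        conv_rhs => rw [hfact]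
        rw [Polynomial.eval_multiset_prod, Multiset.map_map]
        exact congrArg _ (Multiset.map_congr rfl fun t _ => by simp)
      rw [h2, hh]
      simp
    have step3 : (h.roots.map (fun t => Matrix.det (A - t • (1 : Matrix (Fin n) (Fin n) ℂ)))).prod
        = (-1:ℂ)^(n*ℓ) * ((h.roots.map (fun t => (R.map (fun r => t - r)).prod)).prod) := by
      rw [Multiset.map_congr rfl (fun t _ => hdet3 t), Multiset.prod_map_mul,
        Multiset.map_const', Multiset.prod_replicate, hcardh, ← pow_mul]
    have step4 : (R.map (fun r => (h.roots.map (fun t => t - r)).prod)).prod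
        = (-1:ℂ)^(ℓ*n) * ((R.map (fun r => r ^ ℓ - w)).prod) := by
      rw [Multiset.map_congr rfl (fun r _ => hinner r), Multiset.prod_map_mul,
        Multiset.map_const', Multiset.prod_replicate, hcardR, ← pow_mul]
    have hfin : ((R.map (fun r => X - C (r ^ ℓ))).prod).eval w
        = (R.map (fun r => w - r ^ ℓ)).prod := by
      rw [Polynomial.eval_multiset_prod, Multiset.map_map]
      exact congrArg _ (Multiset.map_congr rfl fun r _ => by simp)
    have hflip : (R.map (fun r => w - r ^ ℓ)).prod
        = (-1:ℂ)^n * (R.map (fun r => r ^ ℓ - w)).prod := by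
      have h3 : (R.map (fun r => w - r ^ ℓ)) = (R.map (fun r => (-1:ℂ) * (r ^ ℓ - w))) :=
        Multiset.map_congr rfl fun r _ => by ring
      rw [h3, Multiset.prod_map_mul, Multiset.map_const', Multiset.prod_replicate, hcardR]
    rw [hfin]
    calc (Matrix.charpoly (A ^ ℓ)).eval w
        = (-1 : ℂ) ^ n * Matrix.det (Polynomial.aeval A h) := hdet1
      _ = (-1 : ℂ) ^ n * ((-1:ℂ)^(n*ℓ) *
            ((h.roots.map (fun t => (R.map (fun r => t - r)).prod)).prod)) := by
          rw [hdet2, step3]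
      _ = (-1 : ℂ) ^ n * ((-1:ℂ)^(n*ℓ) *
            ((R.map (fun r => (h.roots.map (fun t => t - r)).prod)).prod)) := by
          rw [Multiset.prod_map_prod_map]
      _ = (-1 : ℂ) ^ n * ((-1:ℂ)^(n*ℓ) * ((-1:ℂ)^(ℓ*n) *
            ((R.map (fun r => r ^ ℓ - w)).prod))) := by rw [step4]
      _ = (-1 : ℂ) ^ n * ((R.map (fun r => r ^ ℓ - w)).prod) := by
          rw [← mul_assoc ((-1:ℂ)^(n*ℓ)), hcanc, one_mul]
      _ = (R.map (fun r => w - r ^ ℓ)).prod := hflip.symm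
  have heq : Matrix.charpoly (A ^ ℓ) = (R.map (fun r => X - C (r ^ ℓ))).prod :=
    Polynomial.funext key
  have hmm : (Multiset.map (fun r => X - C (r ^ ℓ)) R)
      = Multiset.map (fun s => X - C s) (Multiset.map (fun r => r ^ ℓ) R) := by
    rw [Multiset.map_map]; rfl
  have hroots : (Matrix.charpoly (A ^ ℓ)).roots = R.map (fun r => r ^ ℓ) := by
    rw [heq, hmm, Polynomial.roots_multiset_prod_X_sub_C]
  rw [Matrix.trace_eq_sum_roots_charpoly (A ^ ℓ), hroots]

lemma trace_pow_real {n : ℕ} (B : Matrix (Fin n) (Fin n) ℝ)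
    (hspl : (Matrix.charpoly B).Splits) (ℓ : ℕ) :
    Matrix.trace (B ^ ℓ) = ((Matrix.charpoly B).roots.map (fun r => r ^ ℓ)).sum := by
  set φ : ℝ →+* ℂ := algebraMap ℝ ℂ with hφ
  have h1 : (B.map φ) ^ ℓ = (B ^ ℓ).map φ := by
    rw [← RingHom.mapMatrix_apply, ← RingHom.mapMatrix_apply, map_pow]
  have htr : Matrix.trace ((B.map φ) ^ ℓ) = φ (Matrix.trace (B ^ ℓ)) := by
    rw [h1]
    simp [Matrix.trace, Matrix.diag, Matrix.map_apply, map_sum]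
  have hchar : (B.map φ).charpoly = (Matrix.charpoly B).map φ := Matrix.charpoly_map B φ
  have hroots2 : ((Matrix.charpoly B).map φ).roots = (Matrix.charpoly B).roots.map φ :=
    hspl.roots_map φ
  have hmain := trace_pow_complex (B.map φ) ℓ
  rw [htr, hchar, hroots2, Multiset.map_map] at hmain
  have hmm : ((Matrix.charpoly B).roots.map ((fun r : ℂ => r ^ ℓ) ∘ φ)).sum
      = φ (((Matrix.charpoly B).roots.map (fun r => r ^ ℓ)).sum) := by
    rw [map_multiset_sum, Multiset.map_map]
    refine congrArg _ (Multiset.map_congr rfl fun r _ => ?_)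
    simp [Function.comp, map_pow]
  rw [hmm] at hmain
  exact φ.injective hmain

lemma charpoly_Mmat (p : ℕ → Polynomial ℝ) (J : ℕ → ℕ → ℝ)
    (hmonic : ∀ n, (p n).Monic) (hdeg : ∀ n, (p n).natDegree = n)
    (hrec : ∀ m : ℕ, X * p m = p (m + 1) + ∑ k ∈ Finset.range (m + 1), C (J m k) * p k)
    (n : ℕ) (hn : 1 ≤ n) :
    Matrix.charpoly (Matrix.of fun i j : Fin n => Sfull J (j : ℕ) (i : ℕ)) = p n := by
  classical
  haveI : Nonempty (Fin n) := ⟨⟨0, by omega⟩⟩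
  have hpn := hmonic n
  have hdegn : (p n).natDegree = n := hdeg n
  have hdegpos : (p n).degree ≠ 0 := by
    rw [Polynomial.degree_eq_natDegree hpn.ne_zero, hdegn]
    exact_mod_cast (by omega : n ≠ 0)
  haveI := AdjoinRoot.nontrivial (f := p n) hdegpos
  set pb := AdjoinRoot.powerBasis' hpn with hpb
  haveI : Module.Finite ℝ (AdjoinRoot (p n)) := Module.Finite.of_basis pb.basis
  set v : Fin n → AdjoinRoot (p n) := fun j => AdjoinRoot.mk (p n) (p (j : ℕ)) with hv
  set M : Matrix (Fin n) (Fin n) ℝ :=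
    Matrix.of (fun i j : Fin n => Sfull J (j : ℕ) (i : ℕ)) with hM
  -- linear independence of the polynomials p_0, ..., p_{n-1}
  set L : Matrix (Fin n) (Fin n) ℝ :=
    Matrix.of (fun i j : Fin n => (p (j : ℕ)).coeff (i : ℕ)) with hL
  have hLtri : L.BlockTriangular id := by
    intro i j hij
    exact Polynomial.coeff_eq_zero_of_natDegree_lt (by rw [hdeg]; exact_mod_cast hij)
  have hdetL : L.det = 1 := by
    rw [Matrix.det_of_upperTriangular hLtri]
    refine Finset.prod_eq_one fun i _ => ?_
    show (p (i : ℕ)).coeff (i : ℕ) = 1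
    have h1 := (hmonic (i : ℕ)).coeff_natDegree
    rw [hdeg] at h1; exact h1
  have hLunit : IsUnit L := (Matrix.isUnit_iff_isUnit_det L).mpr (hdetL ▸ isUnit_one)
  have hLcols : LinearIndependent ℝ (fun j : Fin n => L.transpose j) :=
    Matrix.linearIndependent_cols_iff_isUnit.mpr hLunit
  have hPind : LinearIndependent ℝ (fun j : Fin n => p (j : ℕ)) := by
    refine LinearIndependent.of_comp
      (LinearMap.pi fun i : Fin n => Polynomial.lcoeff ℝ (i : ℕ)) ?_
    have heq : ((LinearMap.pi fun i : Fin n => Polynomial.lcoeff ℝ (i : ℕ)) ∘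
        fun j : Fin n => p (j : ℕ)) = fun j : Fin n => L.transpose j := by
      funext j; funext i; rfl
    rw [heq]; exact hLcols
  have hvind : LinearIndependent ℝ v := by
    rw [Fintype.linearIndependent_iff]
    intro g hg
    have hmk : AdjoinRoot.mk (p n) (∑ j : Fin n, g j • p (j : ℕ)) = 0 := by
      rw [map_sum]
      rw [show (fun j : Fin n => AdjoinRoot.mk (p n) (g j • p (j : ℕ)))
          = fun j : Fin n => g j • AdjoinRoot.mk (p n) (p (j : ℕ)) from
        funext fun j => (AdjoinRoot.smul_mk (f := p n) (g j) (x := p (j : ℕ))).symm] at *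
      exact hg
    have hdvd : p n ∣ ∑ j : Fin n, g j • p (j : ℕ) := (AdjoinRoot.mk_eq_zero).mp hmk
    have hdeglt : (∑ j : Fin n, g j • p (j : ℕ)).degree < (p n).degree := by
      rw [Polynomial.degree_eq_natDegree hpn.ne_zero, hdegn]
      refine lt_of_le_of_lt (Polynomial.degree_sum_le _ _) ?_
      rw [Finset.sup_lt_iff (by exact_mod_cast WithBot.bot_lt_coe n)]
      intro j _
      refine lt_of_le_of_lt (Polynomial.degree_smul_le _ _) ?_
      refine lt_of_le_of_lt Polynomial.degree_le_natDegree ?_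
      rw [hdeg]; exact_mod_cast j.isLt
    have hzero : ∑ j : Fin n, g j • p (j : ℕ) = 0 :=
      Polynomial.eq_zero_of_dvd_of_degree_lt hdvd hdeglt
    exact fun j => (Fintype.linearIndependent_iff.mp hPind) g hzero j
  have hcard : Fintype.card (Fin n) = Module.finrank ℝ (AdjoinRoot (p n)) := by
    rw [Fintype.card_fin, PowerBasis.finrank pb, hpb, AdjoinRoot.powerBasis'_dim, hdegn]
  set b : Module.Basis (Fin n) ℝ (AdjoinRoot (p n)) :=
    basisOfLinearIndependentOfCardEqFinrank hvind hcard with hb'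
  have hb : ∀ j, b j = v j := fun j => by
    rw [hb', coe_basisOfLinearIndependentOfCardEqFinrank]
  -- core recurrence identity in AdjoinRoot
  have hcore : ∀ j : ℕ, j < n → AdjoinRoot.mk (p n) (X * p j)
      = ∑ i ∈ Finset.range n, Sfull J j i • AdjoinRoot.mk (p n) (p i) := by
    intro j hj
    have hsplit : ∀ i ∈ Finset.range n,
        Sfull J j i • AdjoinRoot.mk (p n) (p i)
          = (if i = j + 1 then AdjoinRoot.mk (p n) (p i) else 0)
            + (if i ≤ j then J j i • AdjoinRoot.mk (p n) (p i) else 0) := by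
      intro i _
      show ((if i = j + 1 then (1:ℝ) else 0) + (if i ≤ j then J j i else 0)) •
          AdjoinRoot.mk (p n) (p i) = _
      rw [add_smul, ite_smul, one_smul, zero_smul, ite_smul, zero_smul]
    rw [Finset.sum_congr rfl hsplit, Finset.sum_add_distrib]
    have h1 : ∑ i ∈ Finset.range n, (if i = j + 1 then AdjoinRoot.mk (p n) (p i) else 0)
        = AdjoinRoot.mk (p n) (p (j + 1)) := by
      rw [Finset.sum_ite_eq' (Finset.range n) (j+1) (fun i => AdjoinRoot.mk (p n) (p i))]
      split
      · rfl
      · next h =>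
          rw [Finset.mem_range] at h
          have : j + 1 = n := by omega
          rw [this, AdjoinRoot.mk_self]
    have h2 : ∑ i ∈ Finset.range n, (if i ≤ j then J j i • AdjoinRoot.mk (p n) (p i) else 0)
        = ∑ i ∈ Finset.range (j + 1), J j i • AdjoinRoot.mk (p n) (p i) := by
      rw [← Finset.sum_subset (Finset.range_subset_range.2 (by omega : j + 1 ≤ n))
        (fun i _ hi => by
          rw [Finset.mem_range, not_lt] at hi
          rw [if_neg (by omega)])]
      exact Finset.sum_congr rfl fun i hi => by
        rw [Finset.mem_range] at hi
        rw [if_pos (by omega)]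
    rw [h1, h2, hrec j, map_add, map_sum]
    congr 1
    refine Finset.sum_congr rfl fun i _ => ?_
    rw [← Polynomial.smul_eq_C_mul, AdjoinRoot.smul_mk]
  have hfb : ∀ j : Fin n, (AdjoinRoot.root (p n)) * b j = ∑ i : Fin n, M i j • b i := by
    intro j
    have hlhs : (AdjoinRoot.root (p n)) * b j = AdjoinRoot.mk (p n) (X * p (j : ℕ)) := by
      rw [hb, hv, map_mul, AdjoinRoot.mk_X]
    rw [hlhs, hcore (j : ℕ) j.isLt]
    rw [show (fun i : Fin n => M i j • b i)
        = fun i : Fin n => Sfull J (j : ℕ) (i : ℕ) • AdjoinRoot.mk (p n) (p (i : ℕ)) from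
      funext fun i => by rw [hb]; rfl]
    exact (Fin.sum_univ_eq_sum_range (fun i => Sfull J (j : ℕ) i • AdjoinRoot.mk (p n) (p i)) n).symm
  have hmat : LinearMap.toMatrix b b (LinearMap.mulLeft ℝ (AdjoinRoot.root (p n))) = M := by
    ext i j
    rw [LinearMap.toMatrix_apply, LinearMap.mulLeft_apply, hfb j, Module.Basis.repr_sum_self]
  have hchar1 : Matrix.charpoly M
      = (LinearMap.mulLeft ℝ (AdjoinRoot.root (p n))).charpoly := by
    rw [← hmat, LinearMap.charpoly_toMatrix]
  have hchar2 : (LinearMap.mulLeft ℝ (AdjoinRoot.root (p n))).charpoly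
      = Matrix.charpoly (Algebra.leftMulMatrix pb.basis pb.gen) := by
    rw [← Algebra.toMatrix_lmul_eq pb.basis, LinearMap.charpoly_toMatrix]
    rfl
  have hmin : minpoly ℝ (AdjoinRoot.root (p n)) = p n := by
    rw [AdjoinRoot.minpoly_root hpn.ne_zero, hpn.leadingCoeff, inv_one, map_one, mul_one]
  rw [hchar1, hchar2, charpoly_leftMulMatrix pb]
  rw [show pb.gen = AdjoinRoot.root (p n) from rfl, hmin]

lemma integral_CD (μ : Measure ℝ) (p : ℕ → Polynomial ℝ) (q : ℕ → ℝ → ℝ) (J : ℕ → ℕ → ℝ)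
    (hrec : ∀ m : ℕ, X * p m = p (m + 1) + ∑ k ∈ Finset.range (m + 1), C (J m k) * p k)
    (hbi : ∀ j k : ℕ, ∫ y, (p j).eval y * q k y ∂μ = if j = k then (1 : ℝ) else 0)
    (hint : ∀ m j k : ℕ, Integrable (fun y => y ^ m * ((p j).eval y * q k y)) μ)
    (ℓ n : ℕ) :
    ∫ y, y ^ ℓ * ∑ j ∈ Finset.range n, (p j).eval y * q j y ∂μ
      = ∑ j ∈ Finset.range n, U (Sfull J) ℓ j j := by
  have hsingle : ∀ j : ℕ, ∫ y, y ^ ℓ * ((p j).eval y * q j y) ∂μ = U (Sfull J) ℓ j j := by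
    intro j
    have hpt : ∀ y : ℝ, y ^ ℓ * ((p j).eval y * q j y)
        = ∑ k ∈ Finset.range (j + ℓ + 1), U (Sfull J) ℓ j k * ((p k).eval y * q j y) := by
      intro y
      have h1 : (y : ℝ) ^ ℓ * (p j).eval y = ((X : Polynomial ℝ) ^ ℓ * p j).eval y := by
        rw [Polynomial.eval_mul, Polynomial.eval_pow, Polynomial.eval_X]
      have h2 : ((X : Polynomial ℝ) ^ ℓ * p j).eval y
          = ∑ k ∈ Finset.range (j + ℓ + 1), U (Sfull J) ℓ j k * (p k).eval y := by
        rw [U_expand J p hrec ℓ j, Polynomial.eval_finset_sum]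
        exact Finset.sum_congr rfl fun k _ => by
          rw [Polynomial.eval_mul, Polynomial.eval_C]
      calc y ^ ℓ * ((p j).eval y * q j y) = (y ^ ℓ * (p j).eval y) * q j y := by ring
        _ = (∑ k ∈ Finset.range (j + ℓ + 1), U (Sfull J) ℓ j k * (p k).eval y) * q j y := by
            rw [h1, h2]
        _ = ∑ k ∈ Finset.range (j + ℓ + 1), U (Sfull J) ℓ j k * ((p k).eval y * q j y) := by
            rw [Finset.sum_mul]
            exact Finset.sum_congr rfl fun k _ => by ring
    rw [show (fun y => y ^ ℓ * ((p j).eval y * q j y))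
        = fun y => ∑ k ∈ Finset.range (j + ℓ + 1),
            U (Sfull J) ℓ j k * ((p k).eval y * q j y) from funext hpt]
    have hintk : ∀ k ∈ Finset.range (j + ℓ + 1),
        Integrable (fun y => U (Sfull J) ℓ j k * ((p k).eval y * q j y)) μ := by
      intro k _
      have h0 : Integrable (fun y => (p k).eval y * q j y) μ := by
        have := hint 0 k j
        simpa using this
      exact h0.const_mul _
    rw [integral_finset_sum _ hintk]
    have : ∀ k ∈ Finset.range (j + ℓ + 1),
        ∫ y, U (Sfull J) ℓ j k * ((p k).eval y * q j y) ∂μ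
          = if k = j then U (Sfull J) ℓ j k else 0 := by
      intro k _
      rw [integral_const_mul, hbi k j, mul_ite, mul_one, mul_zero]
    rw [Finset.sum_congr rfl this, Finset.sum_ite_eq' (Finset.range (j + ℓ + 1)) j
      (fun k => U (Sfull J) ℓ j k), if_pos (Finset.mem_range.2 (by omega))]
  have hfun : (fun y => y ^ ℓ * ∑ j ∈ Finset.range n, (p j).eval y * q j y)
      = fun y => ∑ j ∈ Finset.range n, y ^ ℓ * ((p j).eval y * q j y) := by
    funext y; rw [Finset.mul_sum]
  rw [hfun, integral_finset_sum _ (fun j _ => hint ℓ j j)]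
  exact Finset.sum_congr rfl fun j _ => hsingle j


end MZCD

/-- Let `(p n)` be monic real polynomials with `deg p_n = n`, all of whose zeros are real,
satisfying `x p_ℓ = ∑_{k≤ℓ+1} J_{ℓ,k} p_k` with the lower Hessenberg matrix `J` (superdiagonal
`1`) bounded near the diagonal, and let `(q n) ⊂ L²(μ)` be biorthogonal to `(p n)`. With
`ν_n = (1/n) ∑_{zeros of p_n} δ_y` and `dη_n = (1/n) K_n(x,x) dμ`, for every `ℓ ≥ 0` there is
a constant `c` with `|∫ x^ℓ dν_n − ∫ x^ℓ dη_n| ≤ c/n` for all `n ≥ 1`; in particular the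
difference of moments tends to `0`. -/
theorem moments_zero_counting_vs_CD (μ : Measure ℝ) (p : ℕ → Polynomial ℝ)
    (q : ℕ → ℝ → ℝ) (J : ℕ → ℕ → ℝ)
    (hmonic : ∀ n, (p n).Monic) (hdeg : ∀ n, (p n).natDegree = n)
    (hroots : ∀ n, Multiset.card (p n).roots = n)
    (hrec : ∀ ℓ : ℕ, X * p ℓ = p (ℓ + 1) + ∑ k ∈ Finset.range (ℓ + 1), C (J ℓ k) * p k)
    (hJ : ∀ N : ℕ, ∃ C : ℝ, ∀ n : ℕ, N ≤ n → |J n (n - N)| ≤ C)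
    (hbi : ∀ j k : ℕ, ∫ y, (p j).eval y * q k y ∂μ = if j = k then (1 : ℝ) else 0)
    (hint : ∀ m j k : ℕ, Integrable (fun y => y ^ m * ((p j).eval y * q k y)) μ)
    (ℓ : ℕ) :
    ∃ c : ℝ, ∀ n : ℕ, 1 ≤ n →
      |(1 / (n : ℝ)) * (((p n).roots.map (fun r => r ^ ℓ)).sum) -
          (1 / (n : ℝ)) * ∫ y, y ^ ℓ * ∑ j ∈ Finset.range n, (p j).eval y * q j y ∂μ|
        ≤ c / n := by
  classical
  obtain ⟨Cb, hCb0, hCb⟩ := MZCD.Sfull_bound' J hJ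
  obtain ⟨B, hB0, hB⟩ := MZCD.U_bound' Cb hCb0 ℓ 0
  refine ⟨(ℓ : ℝ) * (2 * B), fun n hn => ?_⟩
  have hS0f : ∀ k i, k + 1 < i → MZCD.Sfull J k i = 0 := fun k i h => MZCD.Sfull_eq_zero h
  have hS0t : ∀ k i, k + 1 < i → MZCD.Strunc J n k i = 0 := fun k i h => MZCD.Strunc_eq_zero h
  have hCbt : ∀ N k i, k ≤ i + N → |MZCD.Strunc J n k i| ≤ Cb N :=
    fun N k i h => (MZCD.Strunc_le_Sfull J n k i).trans (hCb N k i h)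
  have hroots_eq : ((p n).roots.map (fun r => r ^ ℓ)).sum
      = ∑ j ∈ Finset.range n, MZCD.U (MZCD.Strunc J n) ℓ j j := by
    have hsp : (p n).Splits :=
      (Polynomial.splits_iff_card_roots).mpr (by rw [hroots n, hdeg n])
    have hch := MZCD.charpoly_Mmat p J hmonic hdeg hrec n hn
    have htr := MZCD.trace_pow_real
      (Matrix.of fun i j : Fin n => MZCD.Sfull J (j : ℕ) (i : ℕ)) (by rw [hch]; exact hsp) ℓ
    rw [hch] at htr
    rw [← htr, MZCD.trace_Mpow J n ℓ]
  have hint_eq : ∫ y, y ^ ℓ * ∑ j ∈ Finset.range n, (p j).eval y * q j y ∂μ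
      = ∑ j ∈ Finset.range n, MZCD.U (MZCD.Sfull J) ℓ j j :=
    MZCD.integral_CD μ p q J hrec hbi hint ℓ n
  rw [hroots_eq, hint_eq, ← mul_sub, ← Finset.sum_sub_distrib]
  set g : ℕ → ℝ := fun j => MZCD.U (MZCD.Strunc J n) ℓ j j - MZCD.U (MZCD.Sfull J) ℓ j j with hg
  have hgz : ∀ j ∈ Finset.range n, j + ℓ < n → g j = 0 := by
    intro j _ hj
    show MZCD.U (MZCD.Strunc J n) ℓ j j - MZCD.U (MZCD.Sfull J) ℓ j j = 0
    rw [MZCD.U_trunc_eq J n ℓ j hj j, sub_self]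
  have hgb : ∀ j : ℕ, |g j| ≤ 2 * B := by
    intro j
    have h1 := hB (MZCD.Strunc J n) hS0t hCbt j j (by omega)
    have h2 := hB (MZCD.Sfull J) hS0f hCb j j (by omega)
    calc |g j| ≤ |MZCD.U (MZCD.Strunc J n) ℓ j j| + |MZCD.U (MZCD.Sfull J) ℓ j j| :=
          abs_sub _ _
      _ ≤ B + B := add_le_add h1 h2
      _ = 2 * B := by ring
  have habs : |∑ j ∈ Finset.range n, g j| ≤ (ℓ : ℝ) * (2 * B) := by
    have hfil : ∑ j ∈ Finset.range n, g j
        = ∑ j ∈ (Finset.range n).filter (fun j => n ≤ j + ℓ), g j := by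
      refine (Finset.sum_filter_of_ne fun j hj hne => ?_).symm
      by_contra h
      push_neg at h
      exact hne (hgz j hj (by rw [Finset.mem_range] at hj; omega))
    have hcard : ((Finset.range n).filter (fun j => n ≤ j + ℓ)).card ≤ ℓ := by
      have hsub : (Finset.range n).filter (fun j => n ≤ j + ℓ) ⊆ Finset.Ico (n - ℓ) n := by
        intro j hj
        rw [Finset.mem_filter, Finset.mem_range] at hj
        rw [Finset.mem_Ico]
        omega
      have hcc := Finset.card_le_card hsub
      rw [Nat.card_Ico] at hcc
      omega
    calc |∑ j ∈ Finset.range n, g j|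
        = |∑ j ∈ (Finset.range n).filter (fun j => n ≤ j + ℓ), g j| := by rw [hfil]
      _ ≤ ∑ j ∈ (Finset.range n).filter (fun j => n ≤ j + ℓ), |g j| :=
          Finset.abs_sum_le_sum_abs _ _
      _ ≤ ∑ _j ∈ (Finset.range n).filter (fun j => n ≤ j + ℓ), 2 * B :=
          Finset.sum_le_sum fun j _ => hgb j
      _ = (((Finset.range n).filter (fun j => n ≤ j + ℓ)).card : ℝ) * (2 * B) := by
          rw [Finset.sum_const, nsmul_eq_mul]
      _ ≤ (ℓ : ℝ) * (2 * B) := by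
          refine mul_le_mul_of_nonneg_right ?_ (by positivity)
          exact_mod_cast hcard
  have hnpos : (0 : ℝ) < n := by exact_mod_cast hn
  rw [abs_mul, abs_of_nonneg (by positivity : (0:ℝ) ≤ 1 / (n:ℝ))]
  calc (1 / (n : ℝ)) * |∑ j ∈ Finset.range n, g j|
      ≤ (1 / (n : ℝ)) * ((ℓ : ℝ) * (2 * B)) :=
        mul_le_mul_of_nonneg_left habs (by positivity)
    _ = (ℓ : ℝ) * (2 * B) / n := by ring
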